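/- For every integer m ≥ 3, the inequality b₂(cot(π/(m+1))) > 2π/m holds, where b₂(H) = √2·π·(H + √(1+H²))^{3/2} / ((1+H²)^{1/4}·(1 + 2H² + 2H√(1+H²))). -/

import Mathlib

open Real

private lemma key_alg (s c : ℝ) (hs : 0 < s) (hc : 0 ≤ c) (h1 : s ^ 2 + c ^ 2 = 1) :
    Real.sqrt 2 * Real.pi * (c/s + Real.sqrt (1 + (c/s) ^ 2)) ^ ((3 : ℝ) / 2)
      / ((1 + (c/s) ^ 2) ^ ((1 : ℝ) / 4) * (1 + 2 * (c/s) ^ 2 + 2 * (c/s) * Real.sqrt (1 + (c/s) ^ 2)))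
    = Real.sqrt 2 * Real.pi * Real.sqrt (1 - c) := by
  have hc1 : (0:ℝ) < c + 1 := by linarith
  have h1p : 1 + (c/s)^2 = (1/s)^2 := by field_simp; linarith
  have hsqrt : Real.sqrt (1 + (c/s)^2) = 1/s := by
    rw [h1p, Real.sqrt_sq (by positivity)]
  set A : ℝ := (c+1)/s with hA
  have hApos : 0 < A := by positivity
  have hAeq : c/s + Real.sqrt (1 + (c/s)^2) = A := by
    rw [hsqrt, hA]; ring
  have hq : (1 + (c/s)^2) ^ ((1:ℝ)/4) = Real.sqrt (1/s) := by
    rw [h1p, ← Real.rpow_natCast (1/s) 2, ← Real.rpow_mul (by positivity),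
      Real.sqrt_eq_rpow]
    norm_num
  have hden : 1 + 2 * (c/s)^2 + 2 * (c/s) * Real.sqrt (1 + (c/s)^2) = A^2 := by
    rw [hsqrt, hA]; field_simp; ring_nf; linear_combination h1
  rw [hAeq, hq, hden]
  have hA3 : A ^ ((3:ℝ)/2) = A * Real.sqrt A := by
    rw [show (3:ℝ)/2 = 1 + 1/2 by norm_num, Real.rpow_add hApos, Real.rpow_one,
      ← Real.sqrt_eq_rpow]
  rw [hA3]
  have hss : Real.sqrt (1/s) = (Real.sqrt s)⁻¹ := by
    rw [one_div, Real.sqrt_inv]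
  rw [hss]
  have hsA : Real.sqrt A * Real.sqrt A = A := Real.mul_self_sqrt hApos.le
  have h1c : 1 - c = s / A := by
    rw [hA]; field_simp; linear_combination -h1
  rw [h1c, Real.sqrt_div hs.le]
  have hAne : Real.sqrt A ≠ 0 := by positivity
  have hsne : Real.sqrt s ≠ 0 := by positivity
  have hsinv : Real.sqrt s * (Real.sqrt s)⁻¹ = 1 := mul_inv_cancel₀ hsne
  have hA1 : Real.sqrt A * (Real.sqrt A)⁻¹ = 1 := mul_inv_cancel₀ hAne
  rw [div_eq_iff (mul_ne_zero (inv_ne_zero hsne) (pow_ne_zero 2 hApos.ne'))]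
  linear_combination (-(Real.sqrt 2 * Real.pi * A * Real.sqrt A)) * hA1
    + (Real.sqrt 2 * Real.pi * A * (Real.sqrt A)⁻¹) * hsA
    - (Real.sqrt 2 * Real.pi * A ^ 2 * (Real.sqrt A)⁻¹) * hsinv

/-- For every integer `m ≥ 3`, `b₂(cot(π/(m+1))) > 2π/m`, where
`b₂ H = √2 π (H+√(1+H²))^{3/2} / ((1+H²)^{1/4}(1+2H²+2H√(1+H²)))`. -/
theorem stmt_14 (m : ℕ) (hm : 3 ≤ m) (b₂ : ℝ → ℝ)
    (hb₂ : ∀ H : ℝ, b₂ H = Real.sqrt 2 * Real.pi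
      * (H + Real.sqrt (1 + H ^ 2)) ^ ((3 : ℝ) / 2)
      / ((1 + H ^ 2) ^ ((1 : ℝ) / 4) * (1 + 2 * H ^ 2 + 2 * H * Real.sqrt (1 + H ^ 2)))) :
    2 * Real.pi / (m : ℝ) < b₂ (Real.cot (Real.pi / ((m : ℝ) + 1))) := by
  have hπl : 3.14 < π := pi_gt_d2
  have hπu : π < 3.15 := pi_lt_d2
  have hm3 : (3:ℝ) ≤ (m:ℝ) := by exact_mod_cast hm
  have hmpos : (0:ℝ) < (m:ℝ) := by linarith
  set θ : ℝ := Real.pi / ((m : ℝ) + 1) with hθ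
  have hθpos : 0 < θ := by positivity
  have hθle : θ ≤ π / 4 := by
    rw [hθ]
    gcongr
    linarith
  have hθlt : θ < π := by linarith
  have hs : 0 < Real.sin θ := Real.sin_pos_of_pos_of_lt_pi hθpos hθlt
  have hc : 0 ≤ Real.cos θ := by
    apply Real.cos_nonneg_of_mem_Icc
    constructor <;> [linarith; linarith]
  have h1 : Real.sin θ ^ 2 + Real.cos θ ^ 2 = 1 := Real.sin_sq_add_cos_sq θ
  rw [hb₂, Real.cot_eq_cos_div_sin, key_alg (Real.sin θ) (Real.cos θ) hs hc h1]
  -- half angle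
  have hhalf : 1 - Real.cos θ = 2 * Real.sin (θ/2) ^ 2 := by
    have h := Real.sin_sq_eq_half_sub (θ/2)
    rw [show 2 * (θ/2) = θ by ring] at h
    linarith
  have hsin2 : 0 < Real.sin (θ/2) :=
    Real.sin_pos_of_pos_of_lt_pi (by positivity) (by linarith)
  have hsqrt1c : Real.sqrt (1 - Real.cos θ) = Real.sqrt 2 * Real.sin (θ/2) := by
    rw [hhalf, Real.sqrt_mul (by norm_num), Real.sqrt_sq hsin2.le]
  have h22 : Real.sqrt 2 * Real.sqrt 2 = 2 := Real.mul_self_sqrt (by norm_num)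
  have hrw : Real.sqrt 2 * π * Real.sqrt (1 - Real.cos θ) = 2 * π * Real.sin (θ/2) := by
    rw [hsqrt1c]; linear_combination (π * Real.sin (θ/2)) * h22
  rw [hrw]
  -- reduce to sin bound
  have hkey : 1 / (m:ℝ) < Real.sin (θ/2) := by
    set x : ℝ := θ / 2 with hx
    have hxpos : 0 < x := by positivity
    have hx_hi : x ≤ 0.39375 := by rw [hx]; linarith
    have hx1 : x ≤ 1 := by linarith
    have hsin : x - x ^ 3 / 4 < Real.sin x := by
      have := Real.sin_gt_sub_cube hxpos; linarith [pow_pos hxpos 3]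
    have hxm : 1.57 < x * ((m:ℝ) + 1) := by
      have hxe : x * ((m:ℝ) + 1) = π / 2 := by
        rw [hx, hθ]; field_simp
      rw [hxe]; linarith
    have hx2 : x * x ≤ 0.1551 := by
      calc x * x ≤ 0.39375 * 0.39375 := mul_le_mul hx_hi hx_hi hxpos.le (by norm_num)
        _ ≤ 0.1551 := by norm_num
    have hx3 : x ^ 3 ≤ 0.1551 * x := by
      calc x ^ 3 = (x * x) * x := by ring
        _ ≤ 0.1551 * x := mul_le_mul_of_nonneg_right hx2 hxpos.le
    have hexp : x * ((m:ℝ) + 1) = x * (m:ℝ) + x := by ring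
    have hxm2 : 1.17625 < x * (m:ℝ) := by linarith
    have hA : x ^ 3 * (m:ℝ) ≤ 0.1551 * (x * (m:ℝ)) := by
      calc x ^ 3 * (m:ℝ) ≤ (0.1551 * x) * (m:ℝ) := mul_le_mul_of_nonneg_right hx3 hmpos.le
        _ = 0.1551 * (x * (m:ℝ)) := by ring
    have : 1 / (m:ℝ) < x - x ^ 3 / 4 := by
      rw [div_lt_iff₀ hmpos]
      have hexp2 : (x - x ^ 3 / 4) * (m:ℝ) = x * (m:ℝ) - (x ^ 3 * (m:ℝ)) / 4 := by ring
      linarith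
    linarith
  calc 2 * π / (m:ℝ) = 2 * π * (1 / (m:ℝ)) := by ring
    _ < 2 * π * Real.sin (θ/2) := by
        apply mul_lt_mul_of_pos_left hkey
        positivity
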